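/- With the Lamport superposition-oracle hash unitary U_h (the case w = 2 of the hash-chain oracle unitary, acting on query registers X, Y and secret-key registers S_i^j for i = 1,…,l, j = 0,1), for every secret-key register S_i^j the commutator with the uniform-superposition projector satisfies ‖[U_h, Φ_{S_i^j}]‖ ≤ 6·2^{−n/2}. -/

import Mathlib

open scoped Matrix

set_option synthInstance.maxSize 1024
set_option synthInstance.maxHeartbeats 1000000
set_option maxHeartbeats 1000000

namespace Stmt10

/-- Basis labels for an `n`-qubit register. -/
abbrev Bn (n : ℕ) := Fin n → Bool

/-- Basis labels for the full Lamport system: query registers `X`, `Y`, the secret-key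
registers `S_i^j` and the public-key registers `P_i^j` (`i ∈ {1,…,l}`, `j ∈ {0,1}`). -/
abbrev Idx (n l : ℕ) := Bn n × Bn n × ((Fin l × Bool) → Bn n) × ((Fin l × Bool) → Bn n)

/-- The equality projector `P⁼_{XS_i^j}` comparing `X` with the secret-key register
`S_i^j` (identity elsewhere). -/
noncomputable def Peq (n l : ℕ) (i : Fin l) (j : Bool) :
    Matrix (Idx n l) (Idx n l) ℂ :=
  fun p q => if p.1 = p.2.2.1 (i, j) ∧ q = p then 1 else 0

/-- The transversal CNOT `CNOT^{⊗n}_{P_i^j : Y}` XOR-ing the public-key register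
`P_i^j` into the output register `Y`. -/
noncomputable def Cnot (n l : ℕ) (i : Fin l) (j : Bool) :
    Matrix (Idx n l) (Idx n l) ℂ :=
  fun p q =>
    if q.1 = p.1 ∧ q.2.2 = p.2.2 ∧
        q.2.1 = (fun t => xor (p.2.1 t) (p.2.2.2 (i, j) t))
      then 1 else 0

/-- `U_{i,j} = P⁼_{XS_i^j} ⊗ (CNOT^{⊗n}_{P_i^j:Y} − 1) + 1`. -/
noncomputable def Uij (n l : ℕ) (i : Fin l) (j : Bool) :
    Matrix (Idx n l) (Idx n l) ℂ :=
  Peq n l i j * (Cnot n l i j - 1) + 1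

/-- `P^≠_{XS} = ∏_{i,j} (1 − P⁼_{XS_i^j})`: the (diagonal) projector onto basis states
where `X` differs from all secret-key registers. -/
noncomputable def Pneq (n l : ℕ) : Matrix (Idx n l) (Idx n l) ℂ :=
  fun p q => if (∀ (i : Fin l) (j : Bool), p.1 ≠ p.2.2.1 (i, j)) ∧ q = p then 1 else 0

/-- The extension to the full system of a unitary `U′` acting only on `XY`. -/
noncomputable def Uext (n l : ℕ) (U0 : Matrix (Bn n × Bn n) (Bn n × Bn n) ℂ) :
    Matrix (Idx n l) (Idx n l) ℂ :=
  fun p q => if q.2.2 = p.2.2 then U0 (p.1, p.2.1) (q.1, q.2.1) else 0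

/-- `U^≠ = P^≠_{XS}(U′_{XY} − 1) + 1`. -/
noncomputable def Uneq (n l : ℕ) (U0 : Matrix (Bn n × Bn n) (Bn n × Bn n) ℂ) :
    Matrix (Idx n l) (Idx n l) ℂ :=
  Pneq n l * (Uext n l U0 - 1) + 1

/-- The Lamport superposition-oracle hash unitary `U_h = (∏_{i,j} U_{i,j})·U^≠`. -/
noncomputable def Uh (n l : ℕ) (U0 : Matrix (Bn n × Bn n) (Bn n × Bn n) ℂ) :
    Matrix (Idx n l) (Idx n l) ℂ :=
  (List.ofFn fun i : Fin l => Uij n l i false * Uij n l i true).prod * Uneq n l U0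

/-- The uniform-superposition projector `Φ_{S_i^j}` on the secret-key register `S_i^j`
(identity elsewhere); the rank-one factor `|Φ⟩⟨Φ|` has all entries `2^{−n}`. -/
noncomputable def PhiS (n l : ℕ) (i : Fin l) (j : Bool) :
    Matrix (Idx n l) (Idx n l) ℂ :=
  fun p q =>
    if p.1 = q.1 ∧ p.2.1 = q.2.1 ∧ p.2.2.2 = q.2.2.2 ∧
        (∀ k : Fin l × Bool, k ≠ (i, j) → p.2.2.1 k = q.2.2.1 k)
      then ((2 : ℂ) ^ n)⁻¹ else 0

-- generic sum helpers
lemma sum_collapse {α : Type*} [Fintype α] (f : α → ℂ) (r₀ : α)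
    (h : ∀ r, r ≠ r₀ → f r = 0) : ∑ r, f r = f r₀ :=
  Finset.sum_eq_single r₀ (fun r _ hr => h r hr)
    (fun h' => absurd (Finset.mem_univ r₀) h')

lemma sum_fiber {α β : Type*} [Fintype α] [Fintype β] [DecidableEq α]
    (u : β → α) (hu : Function.Injective u) (g : α → ℂ)
    (h0 : ∀ a, (∀ b, u b ≠ a) → g a = 0) : ∑ a, g a = ∑ b, g (u b) := by
  have h1 : ∑ b, g (u b) = ∑ a ∈ Finset.univ.image u, g a :=
    (Finset.sum_image (fun x _ y _ hxy => hu hxy)).symm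
  rw [h1]
  exact (Finset.sum_subset (Finset.subset_univ _) (fun a _ ha =>
    h0 a (fun b hb => ha (Finset.mem_image.mpr ⟨b, Finset.mem_univ b, hb⟩)))).symm

-- diagonal matrices
lemma diag_mul_apply {n l : ℕ} (D M : Matrix (Idx n l) (Idx n l) ℂ)
    (h0 : ∀ p q, q ≠ p → D p q = 0) (p q : Idx n l) :
    (D * M) p q = D p p * M p q := by
  rw [Matrix.mul_apply]
  exact sum_collapse _ p (fun r hr => by rw [h0 p r hr, zero_mul])

lemma mul_diag_apply {n l : ℕ} (M D : Matrix (Idx n l) (Idx n l) ℂ)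
    (h0 : ∀ p q, q ≠ p → D p q = 0) (p q : Idx n l) :
    (M * D) p q = M p q * D q q := by
  rw [Matrix.mul_apply]
  exact sum_collapse _ q (fun r hr => by rw [h0 r q (Ne.symm hr), mul_zero])

lemma Peq_offdiag {n l : ℕ} (i : Fin l) (j : Bool) :
    ∀ p q : Idx n l, q ≠ p → Peq n l i j p q = 0 := by
  intro p q hq
  simp only [Peq]
  exact if_neg (fun h => hq h.2)

lemma Peq_pp {n l : ℕ} (i : Fin l) (j : Bool) (p : Idx n l) :
    Peq n l i j p p = if p.1 = p.2.2.1 (i, j) then 1 else 0 := by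
  simp only [Peq, and_true]

lemma Peq_conjT {n l : ℕ} (i : Fin l) (j : Bool) :
    (Peq n l i j)ᴴ = Peq n l i j := by
  ext p q
  simp only [Matrix.conjTranspose_apply, Peq]
  by_cases h : q.1 = q.2.2.1 (i, j) ∧ p = q
  · rw [if_pos h, if_pos (by obtain ⟨h1, rfl⟩ := h; exact ⟨h1, rfl⟩), star_one]
  · rw [if_neg h, if_neg (fun h2 => h (by obtain ⟨h1, rfl⟩ := h2; exact ⟨h1, rfl⟩)), star_zero]

lemma Peq_idem {n l : ℕ} (i : Fin l) (j : Bool) :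
    Peq n l i j * Peq n l i j = Peq n l i j := by
  ext p q
  rw [diag_mul_apply _ _ (Peq_offdiag i j), Peq_pp]
  by_cases h : p.1 = p.2.2.1 (i, j)
  · rw [if_pos h, one_mul]
  · rw [if_neg h, zero_mul, Peq]
    exact (if_neg (fun h2 => h h2.1)).symm

lemma PhiS_conjT {n l : ℕ} (i : Fin l) (j : Bool) :
    (PhiS n l i j)ᴴ = PhiS n l i j := by
  ext p q
  simp only [Matrix.conjTranspose_apply, PhiS]
  by_cases h : q.1 = p.1 ∧ q.2.1 = p.2.1 ∧ q.2.2.2 = p.2.2.2 ∧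
      (∀ k : Fin l × Bool, k ≠ (i, j) → q.2.2.1 k = p.2.2.1 k)
  · rw [if_pos h, if_pos ⟨h.1.symm, h.2.1.symm, h.2.2.1.symm, fun k hk => (h.2.2.2 k hk).symm⟩]
    simp
  · rw [if_neg h, if_neg (fun h2 => h ⟨h2.1.symm, h2.2.1.symm, h2.2.2.1.symm,
      fun k hk => (h2.2.2.2 k hk).symm⟩), star_zero]


def upd {n l : ℕ} (i : Fin l) (j : Bool) (p : Idx n l) (s : Bn n) : Idx n l :=
  (p.1, p.2.1, Function.update p.2.2.1 (i, j) s, p.2.2.2)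

lemma upd_inj {n l : ℕ} (i : Fin l) (j : Bool) (p : Idx n l) :
    Function.Injective (upd i j p) := by
  intro s t hst
  have := congrArg (fun r : Idx n l => r.2.2.1 (i, j)) hst
  simpa [upd] using this

lemma upd_of_cond {n l : ℕ} {i : Fin l} {j : Bool} {p r : Idx n l}
    (h1 : p.1 = r.1) (h2 : p.2.1 = r.2.1) (h3 : p.2.2.2 = r.2.2.2)
    (h4 : ∀ k : Fin l × Bool, k ≠ (i, j) → p.2.2.1 k = r.2.2.1 k) :
    upd i j p (r.2.2.1 (i, j)) = r := by
  obtain ⟨px, py, ps, pp⟩ := p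
  obtain ⟨rx, ry, rs, rp⟩ := r
  simp only [upd, Prod.mk.injEq]
  refine ⟨h1, h2, ?_, h3⟩
  funext k
  by_cases hk : k = (i, j)
  · subst hk; simp
  · rw [Function.update_of_ne hk]
    exact h4 k hk

lemma PhiS_upd_left {n l : ℕ} (i : Fin l) (j : Bool) (p : Idx n l) (s : Bn n) :
    PhiS n l i j p (upd i j p s) = ((2 : ℂ) ^ n)⁻¹ := by
  have hc : p.1 = (upd i j p s).1 ∧ p.2.1 = (upd i j p s).2.1 ∧
      p.2.2.2 = (upd i j p s).2.2.2 ∧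
      (∀ k : Fin l × Bool, k ≠ (i, j) → p.2.2.1 k = (upd i j p s).2.2.1 k) :=
    ⟨rfl, rfl, rfl, fun k hk => (Function.update_of_ne hk _ _).symm⟩
  simp only [PhiS]
  rw [if_pos hc]

lemma PhiS_upd_right {n l : ℕ} (i : Fin l) (j : Bool) (p q : Idx n l) (s : Bn n) :
    PhiS n l i j (upd i j p s) q = PhiS n l i j p q := by
  simp only [PhiS]
  refine if_congr ⟨fun h => ?_, fun h => ?_⟩ rfl rfl
  · refine ⟨h.1, h.2.1, h.2.2.1, fun k hk => ?_⟩
    have h5 := h.2.2.2 k hk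
    rwa [show (upd i j p s).2.2.1 k = p.2.2.1 k from Function.update_of_ne hk _ _] at h5
  · refine ⟨h.1, h.2.1, h.2.2.1, fun k hk => ?_⟩
    rw [show (upd i j p s).2.2.1 k = p.2.2.1 k from Function.update_of_ne hk _ _]
    exact h.2.2.2 k hk

lemma card_Bn (n : ℕ) : Fintype.card (Bn n) = 2 ^ n := by
  simp [Bn]

lemma PhiS_idem {n l : ℕ} (i : Fin l) (j : Bool) :
    PhiS n l i j * PhiS n l i j = PhiS n l i j := by
  have h2 : ((2 : ℂ) ^ n) ≠ 0 := pow_ne_zero _ two_ne_zero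
  ext p q
  rw [Matrix.mul_apply]
  have hzero : ∀ a : Idx n l, (∀ b, upd i j p b ≠ a) →
      PhiS n l i j p a * PhiS n l i j a q = 0 := fun a ha => by
    by_cases hc : p.1 = a.1 ∧ p.2.1 = a.2.1 ∧ p.2.2.2 = a.2.2.2 ∧
        (∀ k : Fin l × Bool, k ≠ (i, j) → p.2.2.1 k = a.2.2.1 k)
    · exact absurd (upd_of_cond hc.1 hc.2.1 hc.2.2.1 hc.2.2.2) (ha _)
    · simp only [PhiS]
      rw [if_neg hc, zero_mul]
  rw [sum_fiber (upd i j p) (upd_inj i j p) _ hzero]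
  have heach : ∀ s : Bn n, PhiS n l i j p (upd i j p s) * PhiS n l i j (upd i j p s) q
      = ((2 : ℂ) ^ n)⁻¹ * PhiS n l i j p q := fun s => by
    rw [PhiS_upd_left, PhiS_upd_right]
  rw [Finset.sum_congr rfl (fun s _ => heach s), Finset.sum_const]
  have hcard : (Finset.univ : Finset (Bn n)).card = 2 ^ n := by
    rw [Finset.card_univ, card_Bn]
  rw [hcard, nsmul_eq_mul]
  push_cast
  field_simp

lemma PhiS_Peq_PhiS {n l : ℕ} (i : Fin l) (j : Bool) :
    PhiS n l i j * (Peq n l i j * PhiS n l i j) = ((2 : ℂ) ^ n)⁻¹ • PhiS n l i j := by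
  ext p q
  rw [Matrix.mul_apply]
  have key : ∀ r, (Peq n l i j * PhiS n l i j) r q
      = Peq n l i j r r * PhiS n l i j r q := fun r =>
    diag_mul_apply _ _ (Peq_offdiag i j) r q
  have hzero : ∀ r : Idx n l, r ≠ upd i j p p.1 →
      PhiS n l i j p r * (Peq n l i j * PhiS n l i j) r q = 0 := fun r hr => by
    rw [key]
    by_cases hc : p.1 = r.1 ∧ p.2.1 = r.2.1 ∧ p.2.2.2 = r.2.2.2 ∧
        (∀ k : Fin l × Bool, k ≠ (i, j) → p.2.2.1 k = r.2.2.1 k)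
    · by_cases hd : r.1 = r.2.2.1 (i, j)
      · exfalso
        apply hr
        rw [← upd_of_cond hc.1 hc.2.1 hc.2.2.1 hc.2.2.2]
        congr 1
        rw [← hd, hc.1]
      · rw [Peq_pp, if_neg hd, zero_mul, mul_zero]
    · simp only [PhiS]
      rw [if_neg hc, zero_mul]
  rw [sum_collapse _ (upd i j p p.1) hzero]
  rw [PhiS_upd_left, key, Matrix.smul_apply, smul_eq_mul]
  have hdiag : (upd i j p p.1).1 = (upd i j p p.1).2.2.1 (i, j) := by
    simp [upd]
  rw [Peq_pp, if_pos hdiag, one_mul, PhiS_upd_right]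


-- permutation machinery
def sig {n l : ℕ} (a : Fin l) (b : Bool) (p : Idx n l) : Idx n l :=
  (p.1, fun t => xor (p.2.1 t) (p.2.2.2 (a, b) t), p.2.2)

lemma sig_invol {n l : ℕ} (a : Fin l) (b : Bool) :
    Function.Involutive (sig (n := n) (l := l) a b) := by
  intro p
  obtain ⟨px, py, ps, pp⟩ := p
  have hy : (fun t => xor (xor (py t) (pp (a, b) t)) (pp (a, b) t)) = py :=
    funext fun t => by cases py t <;> cases pp (a, b) t <;> rfl
  simp only [sig]
  rw [hy]

lemma Cnot_apply {n l : ℕ} (a : Fin l) (b : Bool) (p q : Idx n l) :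
    Cnot n l a b p q = if q = sig a b p then 1 else 0 := by
  simp only [Cnot]
  refine if_congr ?_ rfl rfl
  obtain ⟨px, py, ps, pp⟩ := p
  obtain ⟨qx, qy, qs, qp⟩ := q
  simp only [sig, Prod.mk.injEq]
  tauto

def tau {n l : ℕ} (a : Fin l) (b : Bool) (p : Idx n l) : Idx n l :=
  if p.1 = p.2.2.1 (a, b) then sig a b p else p

lemma tau_invol {n l : ℕ} (a : Fin l) (b : Bool) :
    Function.Involutive (tau (n := n) (l := l) a b) := by
  intro p
  by_cases h : p.1 = p.2.2.1 (a, b)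
  · have h1 : tau a b p = sig a b p := if_pos h
    have h2 : tau a b (sig a b p) = sig a b (sig a b p) := if_pos h
    rw [h1, h2, sig_invol]
  · have h1 : tau a b p = p := if_neg h
    rw [h1, h1]

lemma Uij_apply {n l : ℕ} (a : Fin l) (b : Bool) (p q : Idx n l) :
    Uij n l a b p q = if q = tau a b p then 1 else 0 := by
  have h1 : Uij n l a b p q
      = Peq n l a b p p * ((Cnot n l a b - 1) p q) + (1 : Matrix (Idx n l) (Idx n l) ℂ) p q := by
    rw [Uij, Matrix.add_apply, diag_mul_apply _ _ (Peq_offdiag a b)]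
  rw [h1, Matrix.sub_apply, Cnot_apply, Peq_pp, tau]
  by_cases h : p.1 = p.2.2.1 (a, b)
  · rw [if_pos h, if_pos h, one_mul, Matrix.one_apply]
    by_cases hq : p = q
    · subst hq; simp
    · rw [if_neg hq, sub_zero, add_zero]
  · rw [if_neg h, if_neg h, zero_mul, zero_add, Matrix.one_apply]
    refine if_congr ⟨fun h2 => h2.symm, fun h2 => h2.symm⟩ rfl rfl

lemma perm_star_mul_self {n l : ℕ} (C : Matrix (Idx n l) (Idx n l) ℂ)
    (τ : Idx n l → Idx n l) (hτ : Function.Involutive τ)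
    (hC : ∀ p q, C p q = if q = τ p then 1 else 0) : Cᴴ * C = 1 := by
  ext p q
  rw [Matrix.mul_apply]
  have hzero : ∀ r : Idx n l, r ≠ τ p → Cᴴ p r * C r q = 0 := fun r hr => by
    rw [Matrix.conjTranspose_apply, hC r p, if_neg (fun h => hr (by rw [h, hτ]))]
    rw [star_zero, zero_mul]
  rw [sum_collapse _ (τ p) hzero, Matrix.conjTranspose_apply, hC (τ p) p, hC (τ p) q,
    hτ p, if_pos rfl, star_one, one_mul, Matrix.one_apply]
  exact if_congr ⟨fun h => h.symm, fun h => h.symm⟩ rfl rfl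

lemma Cnot_unitary {n l : ℕ} (a : Fin l) (b : Bool) :
    (Cnot n l a b)ᴴ * Cnot n l a b = 1 :=
  perm_star_mul_self _ _ (sig_invol a b) (Cnot_apply a b)

lemma Uij_unitary {n l : ℕ} (a : Fin l) (b : Bool) :
    (Uij n l a b)ᴴ * Uij n l a b = 1 :=
  perm_star_mul_self _ _ (tau_invol a b) (Uij_apply a b)


-- commutation lemmas
lemma Peq_comm_PhiS {n l : ℕ} {i : Fin l} {j : Bool} {a : Fin l} {b : Bool}
    (hab : (a, b) ≠ (i, j)) :
    Peq n l a b * PhiS n l i j = PhiS n l i j * Peq n l a b := by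
  ext p q
  rw [diag_mul_apply _ _ (Peq_offdiag a b), mul_diag_apply _ _ (Peq_offdiag a b),
    Peq_pp, Peq_pp]
  by_cases hφ : p.1 = q.1 ∧ p.2.1 = q.2.1 ∧ p.2.2.2 = q.2.2.2 ∧
      (∀ k : Fin l × Bool, k ≠ (i, j) → p.2.2.1 k = q.2.2.1 k)
  · have hiff : (p.1 = p.2.2.1 (a, b)) ↔ (q.1 = q.2.2.1 (a, b)) := by
      rw [hφ.1, hφ.2.2.2 (a, b) hab]
    by_cases hc : p.1 = p.2.2.1 (a, b)
    · rw [if_pos hc, if_pos (hiff.mp hc), one_mul, mul_one]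
    · rw [if_neg hc, if_neg (fun h => hc (hiff.mpr h)), zero_mul, mul_zero]
  · have h0 : PhiS n l i j p q = 0 := by simp only [PhiS]; exact if_neg hφ
    rw [h0, mul_zero, zero_mul]

def Qm (n l : ℕ) (i : Fin l) (j : Bool) : Matrix (Idx n l) (Idx n l) ℂ :=
  fun p q => if (∀ k : Fin l × Bool, k ≠ (i, j) → p.1 ≠ p.2.2.1 k) ∧ q = p then 1 else 0

lemma Qm_offdiag {n l : ℕ} (i : Fin l) (j : Bool) :
    ∀ p q : Idx n l, q ≠ p → Qm n l i j p q = 0 := fun p q hq =>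
  if_neg (fun h => hq h.2)

lemma Qm_pp {n l : ℕ} (i : Fin l) (j : Bool) (p : Idx n l) :
    Qm n l i j p p = if (∀ k : Fin l × Bool, k ≠ (i, j) → p.1 ≠ p.2.2.1 k) then 1 else 0 := by
  simp only [Qm, and_true]

lemma Qm_conjT {n l : ℕ} (i : Fin l) (j : Bool) :
    (Qm n l i j)ᴴ = Qm n l i j := by
  ext p q
  simp only [Matrix.conjTranspose_apply, Qm]
  by_cases h : (∀ k : Fin l × Bool, k ≠ (i, j) → q.1 ≠ q.2.2.1 k) ∧ p = q
  · rw [if_pos h, if_pos (by obtain ⟨h1, rfl⟩ := h; exact ⟨h1, rfl⟩), star_one]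
  · rw [if_neg h, if_neg (fun h2 => h (by obtain ⟨h1, rfl⟩ := h2; exact ⟨h1, rfl⟩)), star_zero]

lemma Qm_idem {n l : ℕ} (i : Fin l) (j : Bool) :
    Qm n l i j * Qm n l i j = Qm n l i j := by
  ext p q
  rw [diag_mul_apply _ _ (Qm_offdiag i j), Qm_pp]
  by_cases h : (∀ k : Fin l × Bool, k ≠ (i, j) → p.1 ≠ p.2.2.1 k)
  · rw [if_pos h, one_mul]
  · rw [if_neg h, zero_mul, Qm]
    exact (if_neg (fun h2 => h h2.1)).symm

lemma Qm_comm_PhiS {n l : ℕ} (i : Fin l) (j : Bool) :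
    Qm n l i j * PhiS n l i j = PhiS n l i j * Qm n l i j := by
  ext p q
  rw [diag_mul_apply _ _ (Qm_offdiag i j), mul_diag_apply _ _ (Qm_offdiag i j),
    Qm_pp, Qm_pp]
  by_cases hφ : p.1 = q.1 ∧ p.2.1 = q.2.1 ∧ p.2.2.2 = q.2.2.2 ∧
      (∀ k : Fin l × Bool, k ≠ (i, j) → p.2.2.1 k = q.2.2.1 k)
  · have hiff : (∀ k : Fin l × Bool, k ≠ (i, j) → p.1 ≠ p.2.2.1 k) ↔
        (∀ k : Fin l × Bool, k ≠ (i, j) → q.1 ≠ q.2.2.1 k) := by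
      constructor
      · intro h k hk
        rw [← hφ.1, ← hφ.2.2.2 k hk]
        exact h k hk
      · intro h k hk
        rw [hφ.1, hφ.2.2.2 k hk]
        exact h k hk
    by_cases hc : (∀ k : Fin l × Bool, k ≠ (i, j) → p.1 ≠ p.2.2.1 k)
    · rw [if_pos hc, if_pos (hiff.mp hc), one_mul, mul_one]
    · rw [if_neg hc, if_neg (fun h => hc (hiff.mpr h)), zero_mul, mul_zero]
  · have h0 : PhiS n l i j p q = 0 := by simp only [PhiS]; exact if_neg hφ
    rw [h0, mul_zero, zero_mul]

lemma Pneq_offdiag {n l : ℕ} :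
    ∀ p q : Idx n l, q ≠ p → Pneq n l p q = 0 := fun p q hq =>
  if_neg (fun h => hq h.2)

lemma Pneq_conjT {n l : ℕ} : (Pneq n l)ᴴ = Pneq n l := by
  ext p q
  simp only [Matrix.conjTranspose_apply, Pneq]
  by_cases h : (∀ (a : Fin l) (b : Bool), q.1 ≠ q.2.2.1 (a, b)) ∧ p = q
  · rw [if_pos h, if_pos (by obtain ⟨h1, rfl⟩ := h; exact ⟨h1, rfl⟩), star_one]
  · rw [if_neg h, if_neg (fun h2 => h (by obtain ⟨h1, rfl⟩ := h2; exact ⟨h1, rfl⟩)), star_zero]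

lemma Pneq_pp {n l : ℕ} (p : Idx n l) :
    Pneq n l p p = if (∀ (a : Fin l) (b : Bool), p.1 ≠ p.2.2.1 (a, b)) then 1 else 0 := by
  simp only [Pneq, and_true]

lemma Pneq_idem {n l : ℕ} : Pneq n l * Pneq n l = Pneq n l := by
  ext p q
  rw [diag_mul_apply _ _ Pneq_offdiag, Pneq_pp]
  by_cases h : (∀ (a : Fin l) (b : Bool), p.1 ≠ p.2.2.1 (a, b))
  · rw [if_pos h, one_mul]
  · rw [if_neg h, zero_mul, Pneq]
    exact (if_neg (fun h2 => h h2.1)).symm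

lemma Pneq_factor {n l : ℕ} (i : Fin l) (j : Bool) :
    Pneq n l = Qm n l i j * (1 - Peq n l i j) := by
  ext p q
  rw [diag_mul_apply _ _ (Qm_offdiag i j), Qm_pp]
  by_cases hq : q = p
  · subst hq
    rw [Matrix.sub_apply, Matrix.one_apply_eq, Peq_pp, Pneq_pp]
    have hiff : (∀ (a : Fin l) (b : Bool), q.1 ≠ q.2.2.1 (a, b)) ↔
        ((∀ k : Fin l × Bool, k ≠ (i, j) → q.1 ≠ q.2.2.1 k) ∧ ¬(q.1 = q.2.2.1 (i, j))) := by
      constructor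
      · exact fun h => ⟨fun k _ => h k.1 k.2, h i j⟩
      · intro h a b
        by_cases hab : ((a, b) : Fin l × Bool) = (i, j)
        · rw [hab]; exact h.2
        · exact h.1 (a, b) hab
    by_cases hQ : (∀ k : Fin l × Bool, k ≠ (i, j) → q.1 ≠ q.2.2.1 k) <;>
      by_cases hP : q.1 = q.2.2.1 (i, j)
    · rw [if_pos hQ, if_pos hP, if_neg (fun h => (hiff.mp h).2 hP)]; norm_num
    · rw [if_pos hQ, if_neg hP, if_pos (hiff.mpr ⟨hQ, hP⟩)]; norm_num
    · rw [if_neg hQ, if_pos hP, if_neg (fun h => (hiff.mp h).2 hP)]; norm_num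
    · rw [if_neg hQ, if_neg hP, if_neg (fun h => hQ (hiff.mp h).1)]; norm_num
  · rw [Pneq_offdiag p q hq, Matrix.sub_apply, Matrix.one_apply_ne (fun h => hq h.symm),
      Peq_offdiag i j p q hq]
    norm_num


lemma perm_mul_apply {n l : ℕ} (C M : Matrix (Idx n l) (Idx n l) ℂ)
    (τ : Idx n l → Idx n l) (hC : ∀ p q, C p q = if q = τ p then 1 else 0)
    (p q : Idx n l) : (C * M) p q = M (τ p) q := by
  rw [Matrix.mul_apply]
  have hzero : ∀ r : Idx n l, r ≠ τ p → C p r * M r q = 0 := fun r hr => by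
    rw [hC p r, if_neg hr, zero_mul]
  rw [sum_collapse _ (τ p) hzero, hC p (τ p), if_pos rfl, one_mul]

lemma mul_perm_apply {n l : ℕ} (M C : Matrix (Idx n l) (Idx n l) ℂ)
    (τ : Idx n l → Idx n l) (hτ : Function.Involutive τ)
    (hC : ∀ p q, C p q = if q = τ p then 1 else 0)
    (p q : Idx n l) : (M * C) p q = M p (τ q) := by
  rw [Matrix.mul_apply]
  have hzero : ∀ r : Idx n l, r ≠ τ q → M p r * C r q = 0 := fun r hr => by
    rw [hC r q, if_neg (fun h => hr (by rw [h, hτ])), mul_zero]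
  rw [sum_collapse _ (τ q) hzero, hC (τ q) q, hτ q, if_pos rfl, mul_one]

lemma Cnot_comm_PhiS {n l : ℕ} (i : Fin l) (j : Bool) (a : Fin l) (b : Bool) :
    Cnot n l a b * PhiS n l i j = PhiS n l i j * Cnot n l a b := by
  ext p q
  rw [perm_mul_apply _ _ _ (Cnot_apply a b), mul_perm_apply _ _ _ (sig_invol a b) (Cnot_apply a b)]
  obtain ⟨px, py, ps, pp⟩ := p
  obtain ⟨qx, qy, qs, qp⟩ := q
  simp only [PhiS, sig]
  refine if_congr ⟨fun h => ?_, fun h => ?_⟩ rfl rfl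
  · obtain ⟨h1, h2, h3, h4⟩ := h
    refine ⟨h1, funext fun t => ?_, h3, h4⟩
    have h5 := congrFun h2 t
    have h6 : qp (a, b) t = pp (a, b) t := by rw [← h3]
    rw [h6, ← h5]
    cases py t <;> cases pp (a, b) t <;> rfl
  · obtain ⟨h1, h2, h3, h4⟩ := h
    refine ⟨h1, funext fun t => ?_, h3, h4⟩
    have h5 := congrFun h2 t
    have h6 : qp (a, b) t = pp (a, b) t := by rw [← h3]
    rw [h5, h6]
    cases qy t <;> cases pp (a, b) t <;> rfl

lemma Uext_comm_PhiS {n l : ℕ} (i : Fin l) (j : Bool)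
    (U0 : Matrix (Bn n × Bn n) (Bn n × Bn n) ℂ) :
    Uext n l U0 * PhiS n l i j = PhiS n l i j * Uext n l U0 := by
  ext p q
  rw [Matrix.mul_apply, Matrix.mul_apply]
  have hUe : ∀ p q : Idx n l, Uext n l U0 p q
      = if q.2.2 = p.2.2 then U0 (p.1, p.2.1) (q.1, q.2.1) else 0 := fun _ _ => rfl
  have hzeroL : ∀ r : Idx n l, r ≠ ((q.1, q.2.1, p.2.2) : Idx n l) →
      Uext n l U0 p r * PhiS n l i j r q = 0 := fun r hr => by
    by_cases h1 : r.2.2 = p.2.2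
    · by_cases h2 : r.1 = q.1 ∧ r.2.1 = q.2.1 ∧ r.2.2.2 = q.2.2.2 ∧
          (∀ k : Fin l × Bool, k ≠ (i, j) → r.2.2.1 k = q.2.2.1 k)
      · refine absurd ?_ hr
        refine Prod.ext_iff.mpr ⟨h2.1, Prod.ext_iff.mpr ⟨h2.2.1, ?_⟩⟩
        exact h1
      · have h0 : PhiS n l i j r q = 0 := if_neg h2
        rw [h0, mul_zero]
    · rw [hUe, if_neg h1, zero_mul]
  have hzeroR : ∀ r : Idx n l, r ≠ ((p.1, p.2.1, q.2.2) : Idx n l) →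
      PhiS n l i j p r * Uext n l U0 r q = 0 := fun r hr => by
    by_cases h1 : q.2.2 = r.2.2
    · by_cases h2 : p.1 = r.1 ∧ p.2.1 = r.2.1 ∧ p.2.2.2 = r.2.2.2 ∧
          (∀ k : Fin l × Bool, k ≠ (i, j) → p.2.2.1 k = r.2.2.1 k)
      · refine absurd ?_ hr
        refine Prod.ext_iff.mpr ⟨h2.1.symm, Prod.ext_iff.mpr ⟨h2.2.1.symm, ?_⟩⟩
        exact h1.symm
      · have h0 : PhiS n l i j p r = 0 := if_neg h2
        rw [h0, zero_mul]
    · rw [hUe, if_neg h1, mul_zero]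
  have e1 : PhiS n l i j ((q.1, q.2.1, p.2.2) : Idx n l) q
      = (if (p.2.2.2 = q.2.2.2 ∧ (∀ k : Fin l × Bool, k ≠ (i, j) → p.2.2.1 k = q.2.2.1 k))
          then ((2 : ℂ) ^ n)⁻¹ else 0 : ℂ) := by
    by_cases hc : p.2.2.2 = q.2.2.2 ∧ (∀ k : Fin l × Bool, k ≠ (i, j) → p.2.2.1 k = q.2.2.1 k)
    · rw [if_pos hc]; exact if_pos ⟨rfl, rfl, hc.1, hc.2⟩
    · rw [if_neg hc]; exact if_neg (fun h => hc ⟨h.2.2.1, h.2.2.2⟩)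
  have e2 : PhiS n l i j p ((p.1, p.2.1, q.2.2) : Idx n l)
      = (if (p.2.2.2 = q.2.2.2 ∧ (∀ k : Fin l × Bool, k ≠ (i, j) → p.2.2.1 k = q.2.2.1 k))
          then ((2 : ℂ) ^ n)⁻¹ else 0 : ℂ) := by
    by_cases hc : p.2.2.2 = q.2.2.2 ∧ (∀ k : Fin l × Bool, k ≠ (i, j) → p.2.2.1 k = q.2.2.1 k)
    · rw [if_pos hc]; exact if_pos ⟨rfl, rfl, hc.1, hc.2⟩
    · rw [if_neg hc]; exact if_neg (fun h => hc ⟨h.2.2.1, h.2.2.2⟩)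
  rw [sum_collapse _ _ hzeroL, sum_collapse _ _ hzeroR, hUe, hUe, if_pos rfl, if_pos rfl, e1, e2]
  ring

lemma Uext_unitary {n l : ℕ} (U0 : Matrix (Bn n × Bn n) (Bn n × Bn n) ℂ)
    (hU0 : U0ᴴ * U0 = 1) : (Uext n l U0)ᴴ * Uext n l U0 = 1 := by
  ext p q
  rw [Matrix.mul_apply]
  have hUe : ∀ p q : Idx n l, Uext n l U0 p q
      = if q.2.2 = p.2.2 then U0 (p.1, p.2.1) (q.1, q.2.1) else 0 := fun _ _ => rfl
  have hzero : ∀ a : Idx n l,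
      (∀ b : Bn n × Bn n, ((b.1, b.2, p.2.2) : Idx n l) ≠ a) →
      (Uext n l U0)ᴴ p a * Uext n l U0 a q = 0 := fun a ha => by
    rw [Matrix.conjTranspose_apply, hUe a p]
    by_cases h1 : p.2.2 = a.2.2
    · refine absurd ?_ (ha (a.1, a.2.1))
      refine (Prod.ext_iff.mpr ⟨rfl, Prod.ext_iff.mpr ⟨rfl, ?_⟩⟩ :
        a = ((a.1, a.2.1, p.2.2) : Idx n l)).symm
      exact h1.symm
    · rw [if_neg h1, star_zero, zero_mul]
  rw [sum_fiber (fun b : Bn n × Bn n => ((b.1, b.2, p.2.2) : Idx n l))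
    (fun x y hxy => by
      have h1 := congrArg (fun r : Idx n l => r.1) hxy
      have h2 := congrArg (fun r : Idx n l => r.2.1) hxy
      exact Prod.ext_iff.mpr ⟨h1, h2⟩) _ hzero]
  by_cases hqp : q.2.2 = p.2.2
  · have heach : ∀ b : Bn n × Bn n,
        (Uext n l U0)ᴴ p (b.1, b.2, p.2.2) * Uext n l U0 (b.1, b.2, p.2.2) q
        = U0ᴴ (p.1, p.2.1) b * U0 b (q.1, q.2.1) := fun b => by
      rw [Matrix.conjTranspose_apply, hUe, hUe, if_pos rfl, if_pos hqp,
        Matrix.conjTranspose_apply, Prod.mk.eta]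
    rw [Finset.sum_congr rfl (fun b _ => heach b), ← Matrix.mul_apply, hU0,
      Matrix.one_apply, Matrix.one_apply]
    refine if_congr ⟨fun h => ?_, fun h => ?_⟩ rfl rfl
    · have h1 := congrArg Prod.fst h
      have h2 := congrArg (fun r : Bn n × Bn n => r.2) h
      refine Prod.ext_iff.mpr ⟨?_, Prod.ext_iff.mpr ⟨?_, ?_⟩⟩
      · exact h1
      · exact h2
      · exact hqp.symm
    · rw [h]
  · have heach : ∀ b : Bn n × Bn n,
        (Uext n l U0)ᴴ p (b.1, b.2, p.2.2) * Uext n l U0 (b.1, b.2, p.2.2) q = 0 := fun b => by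
      rw [hUe, if_neg hqp, mul_zero]
    rw [Finset.sum_congr rfl (fun b _ => heach b), Finset.sum_const, smul_zero,
      Matrix.one_apply_ne (fun h => hqp (by rw [h]))]


-- algebraic commutator identities
lemma Uij_comm_PhiS {n l : ℕ} {i : Fin l} {j : Bool} {a : Fin l} {b : Bool}
    (hab : (a, b) ≠ (i, j)) :
    Uij n l a b * PhiS n l i j = PhiS n l i j * Uij n l a b := by
  have hC : (Cnot n l a b - 1) * PhiS n l i j = PhiS n l i j * (Cnot n l a b - 1) := by
    rw [sub_mul, mul_sub, one_mul, mul_one, Cnot_comm_PhiS]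
  rw [Uij, add_mul, mul_add, one_mul, mul_one, mul_assoc, hC, ← mul_assoc,
    Peq_comm_PhiS hab, mul_assoc]

lemma comm_Uij {n l : ℕ} (i : Fin l) (j : Bool) :
    Uij n l i j * PhiS n l i j - PhiS n l i j * Uij n l i j
      = (Peq n l i j * PhiS n l i j - PhiS n l i j * Peq n l i j) * (Cnot n l i j - 1) := by
  have hC : (Cnot n l i j - 1) * PhiS n l i j = PhiS n l i j * (Cnot n l i j - 1) := by
    rw [sub_mul, mul_sub, one_mul, mul_one, Cnot_comm_PhiS]
  have e1 : Uij n l i j * PhiS n l i j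
      = (Peq n l i j * PhiS n l i j) * (Cnot n l i j - 1) + PhiS n l i j := by
    rw [Uij, add_mul, one_mul, mul_assoc, hC, ← mul_assoc]
  have e2 : PhiS n l i j * Uij n l i j
      = (PhiS n l i j * Peq n l i j) * (Cnot n l i j - 1) + PhiS n l i j := by
    rw [Uij, mul_add, mul_one, ← mul_assoc]
  rw [e1, e2]
  noncomm_ring

lemma comm_Uneq {n l : ℕ} (i : Fin l) (j : Bool)
    (U0 : Matrix (Bn n × Bn n) (Bn n × Bn n) ℂ) :
    Uneq n l U0 * PhiS n l i j - PhiS n l i j * Uneq n l U0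
      = (Qm n l i j * (PhiS n l i j * Peq n l i j - Peq n l i j * PhiS n l i j))
        * (Uext n l U0 - 1) := by
  have hPn : Pneq n l * PhiS n l i j - PhiS n l i j * Pneq n l
      = Qm n l i j * (PhiS n l i j * Peq n l i j - Peq n l i j * PhiS n l i j) := by
    rw [Pneq_factor i j, mul_assoc, ← mul_assoc (PhiS n l i j), ← Qm_comm_PhiS, mul_assoc,
      ← mul_sub]
    congr 1
    rw [sub_mul, mul_sub, one_mul, mul_one]
    noncomm_ring
  have hC : (Uext n l U0 - 1) * PhiS n l i j = PhiS n l i j * (Uext n l U0 - 1) := by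
    rw [sub_mul, mul_sub, one_mul, mul_one, Uext_comm_PhiS]
  have e1 : Uneq n l U0 * PhiS n l i j
      = (Pneq n l * PhiS n l i j) * (Uext n l U0 - 1) + PhiS n l i j := by
    rw [Uneq, add_mul, one_mul, mul_assoc, hC, ← mul_assoc]
  have e2 : PhiS n l i j * Uneq n l U0
      = (PhiS n l i j * Pneq n l) * (Uext n l U0 - 1) + PhiS n l i j := by
    rw [Uneq, mul_add, mul_one, ← mul_assoc]
  rw [e1, e2, ← hPn]
  noncomm_ring

lemma Uneq_eq {n l : ℕ} (U0 : Matrix (Bn n × Bn n) (Bn n × Bn n) ℂ) :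
    Uneq n l U0 = Pneq n l * Uext n l U0 + (1 - Pneq n l) := by
  rw [Uneq]; noncomm_ring

section Cstar
set_option linter.unusedSectionVars false
variable {R : Type*} [NormedRing R] [StarRing R] [CStarRing R]

lemma norm_one_le' : ‖(1 : R)‖ ≤ 1 := by
  have h : ‖star (1:R) * 1‖ = ‖(1:R)‖ * ‖(1:R)‖ := CStarRing.norm_star_mul_self
  rw [star_one, one_mul] at h
  nlinarith [norm_nonneg (1:R)]

lemma isom_norm_le_one (u : R) (h : star u * u = 1) : ‖u‖ ≤ 1 := by
  have h2 : ‖star u * u‖ = ‖u‖ * ‖u‖ := CStarRing.norm_star_mul_self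
  rw [h] at h2
  nlinarith [norm_nonneg u, norm_one_le' (R := R)]

lemma proj_norm_le_one (q : R) (h : star q * q = q) : ‖q‖ ≤ 1 := by
  have h2 : ‖star q * q‖ = ‖q‖ * ‖q‖ := CStarRing.norm_star_mul_self
  rw [h] at h2
  nlinarith [norm_nonneg q]

lemma prod_isom (L : List R) (h : ∀ x ∈ L, star x * x = 1) : star L.prod * L.prod = 1 := by
  induction L with
  | nil => simp
  | cons x t ih =>
    have hx : star x * x = 1 := h x List.mem_cons_self
    have ht : star t.prod * t.prod = 1 := ih fun y hy => h y (List.mem_cons_of_mem x hy)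
    simp only [List.prod_cons, star_mul]
    calc star t.prod * star x * (x * t.prod)
        = star t.prod * (star x * x) * t.prod := by simp only [mul_assoc]
      _ = 1 := by rw [hx, mul_one, ht]

lemma norm_prod_le_one (L : List R) (h : ∀ x ∈ L, ‖x‖ ≤ 1) : ‖L.prod‖ ≤ 1 := by
  induction L with
  | nil => simpa using norm_one_le' (R := R)
  | cons x t ih =>
    have := norm_mul_le x t.prod
    have h1 := h x List.mem_cons_self
    have h2 := ih fun y hy => h y (List.mem_cons_of_mem x hy)
    simp only [List.prod_cons]
    nlinarith [norm_nonneg x, norm_nonneg t.prod]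

lemma comm_list_bound (φ : R) (L : List R) (h1 : ∀ x ∈ L, ‖x‖ ≤ 1) :
    ‖L.prod * φ - φ * L.prod‖ ≤ (L.map fun x => ‖x * φ - φ * x‖).sum := by
  induction L with
  | nil => simp
  | cons x t ih =>
    have hx1 : ‖x‖ ≤ 1 := h1 x List.mem_cons_self
    have ht1 : ‖t.prod‖ ≤ 1 := norm_prod_le_one t fun y hy => h1 y (List.mem_cons_of_mem x hy)
    have iht := ih fun y hy => h1 y (List.mem_cons_of_mem x hy)
    have key : (x :: t).prod * φ - φ * (x :: t).prod
        = x * (t.prod * φ - φ * t.prod) + (x * φ - φ * x) * t.prod := by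
      simp only [List.prod_cons]; noncomm_ring
    rw [key, List.map_cons, List.sum_cons]
    have hs : (0:ℝ) ≤ (List.map (fun x => ‖x * φ - φ * x‖) t).sum :=
      List.sum_nonneg (by simp only [List.mem_map]; rintro a ⟨y, _, rfl⟩; exact norm_nonneg _)
    have b1 : ‖x * (t.prod * φ - φ * t.prod)‖ ≤ ‖x‖ * ‖t.prod * φ - φ * t.prod‖ := norm_mul_le _ _
    have b2 : ‖(x * φ - φ * x) * t.prod‖ ≤ ‖x * φ - φ * x‖ * ‖t.prod‖ := norm_mul_le _ _
    have := norm_add_le (x * (t.prod * φ - φ * t.prod)) ((x * φ - φ * x) * t.prod)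
    nlinarith [norm_nonneg (t.prod * φ - φ * t.prod), norm_nonneg (x * φ - φ * x),
      norm_nonneg x, norm_nonneg t.prod]


lemma mul_isom (u v : R) (hu : star u * u = 1) (hv : star v * v = 1) :
    star (u * v) * (u * v) = 1 := by
  rw [star_mul]
  calc star v * star u * (u * v) = star v * (star u * u) * v := by
        rw [mul_assoc, mul_assoc, mul_assoc]
    _ = 1 := by rw [hu, mul_one, hv]

lemma one_sub_proj {R : Type*} [NormedRing R] [StarRing R]
    (p : R) (h1 : star p = p) (h2 : p * p = p) : star (1 - p) * (1 - p) = 1 - p := by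
  rw [star_sub, star_one, h1]
  have : (1 - p) * (1 - p) = 1 - p - p + p * p := by noncomm_ring
  rw [this, h2]
  noncomm_ring

end Cstar

open scoped InnerProductSpace

section Hilbert

variable {E : Type*} [NormedAddCommGroup E] [InnerProductSpace ℂ E] [CompleteSpace E]

lemma comm_proj_bound (p φ : E →L[ℂ] E) (hp : IsSelfAdjoint p) (hp2 : p * p = p)
    (hφ : IsSelfAdjoint φ) :
    ‖p * φ - φ * p‖ ≤ ‖p * φ * (1 - p)‖ := by
  set X := p * φ * (1 - p) with hX
  set X' := (1 - p) * φ * p with hX'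
  have hstar : star X = X' := by
    simp only [hX, hX', star_mul, star_sub, star_one, hp.star_eq, hφ.star_eq, mul_assoc]
  have hA : p * φ - φ * p = X - X' := by simp only [hX, hX']; noncomm_ring
  have h1p : (1 - p) * (1 - p) = 1 - p := by
    have : (1 - p) * (1 - p) = 1 - p - p + p * p := by noncomm_ring
    rw [this, hp2]; noncomm_ring
  have hXr : X * (1 - p) = X := by rw [hX, mul_assoc, h1p]
  have hX'r : X' * p = X' := by rw [hX', mul_assoc, hp2]
  have hpX : p * X = X := by
    rw [hX, ← mul_assoc, ← mul_assoc, hp2]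
  have hpX' : p * X' = 0 := by
    have : p * (1 - p) = 0 := by rw [mul_sub, mul_one, hp2, sub_self]
    rw [hX', ← mul_assoc, ← mul_assoc, this, zero_mul, zero_mul]
  rw [hA]
  refine ContinuousLinearMap.opNorm_le_bound _ (norm_nonneg X) fun v => ?_
  have hv : v = p v + (1 - p) v := by simp
  have key : ∀ u w : E, ⟪p u, w⟫_ℂ = ⟪u, p w⟫_ℂ := by
    intro u w
    nth_rewrite 1 [← hp.adjoint_eq]
    exact ContinuousLinearMap.adjoint_inner_left p w u
  have hvo : ⟪p v, (1 - p) v⟫_ℂ = 0 := by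
    have h0 : (p * (1 - p)) v = 0 := by
      rw [mul_sub, mul_one, hp2, sub_self]; exact rfl
    rw [key, ← ContinuousLinearMap.mul_apply, h0, inner_zero_right]
  have hvsq : ‖p v‖ ^ 2 + ‖(1 - p) v‖ ^ 2 = ‖v‖ ^ 2 := by
    have := norm_add_sq_eq_norm_sq_add_norm_sq_of_inner_eq_zero _ _ hvo
    rw [← hv] at this; linarith
  have horth : ⟪X v, -(X' v)⟫_ℂ = 0 := by
    rw [inner_neg_right]
    have h1 : X v = p (X v) := by rw [← ContinuousLinearMap.mul_apply, hpX]
    rw [h1, key, ← ContinuousLinearMap.mul_apply, hpX', ContinuousLinearMap.zero_apply,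
      inner_zero_right, neg_zero]
  have hsq : ‖X v - X' v‖ ^ 2 = ‖X v‖ ^ 2 + ‖X' v‖ ^ 2 := by
    have h := norm_add_sq_eq_norm_sq_add_norm_sq_of_inner_eq_zero _ _ horth
    rw [norm_neg] at h
    rw [sub_eq_add_neg]
    simp only [pow_two]
    exact h
  have hXv : ‖X v‖ ≤ ‖X‖ * ‖(1 - p) v‖ := by
    have h1 : X v = X ((1 - p) v) := by rw [← ContinuousLinearMap.mul_apply, hXr]
    rw [h1]; exact X.le_opNorm _
  have hX'v : ‖X' v‖ ≤ ‖X‖ * ‖p v‖ := by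
    have h1 : X' v = X' (p v) := by rw [← ContinuousLinearMap.mul_apply, hX'r]
    have h2 : ‖X'‖ = ‖X‖ := by rw [← hstar, norm_star]
    rw [h1, ← h2]; exact X'.le_opNorm _
  have hcombo : ‖X v - X' v‖ ^ 2 ≤ (‖X‖ * ‖v‖) ^ 2 := by
    rw [hsq]
    have e1 := pow_le_pow_left₀ (norm_nonneg (X v)) hXv 2
    have e2 := pow_le_pow_left₀ (norm_nonneg (X' v)) hX'v 2
    calc ‖X v‖ ^ 2 + ‖X' v‖ ^ 2 ≤ (‖X‖ * ‖(1 - p) v‖) ^ 2 + (‖X‖ * ‖p v‖) ^ 2 :=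
          add_le_add e1 e2
      _ = ‖X‖ ^ 2 * (‖p v‖ ^ 2 + ‖(1 - p) v‖ ^ 2) := by ring
      _ = (‖X‖ * ‖v‖) ^ 2 := by rw [hvsq]; ring
  have h2 : (X - X') v = X v - X' v := rfl
  rw [h2]
  have h3 := Real.sqrt_le_sqrt hcombo
  rwa [Real.sqrt_sq (norm_nonneg _), Real.sqrt_sq (mul_nonneg (norm_nonneg X) (norm_nonneg v))] at h3


end Hilbert


section NormSec

open scoped Matrix.Norms.L2Operator

lemma star_eq_self_Peq {n l : ℕ} (i : Fin l) (j : Bool) :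
    star (Peq n l i j) = Peq n l i j := by
  rw [Matrix.star_eq_conjTranspose, Peq_conjT]

lemma star_eq_self_PhiS {n l : ℕ} (i : Fin l) (j : Bool) :
    star (PhiS n l i j) = PhiS n l i j := by
  rw [Matrix.star_eq_conjTranspose, PhiS_conjT]

lemma norm_PhiS_le_one {n l : ℕ} (i : Fin l) (j : Bool) : ‖PhiS n l i j‖ ≤ 1 :=
  proj_norm_le_one _ (by rw [star_eq_self_PhiS, PhiS_idem])

lemma norm_two_complex : ‖(2 : ℂ)‖ = 2 := by norm_num

lemma eps_sq {n : ℕ} :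
    (2 : ℝ) ^ (-(n : ℝ) / 2) * (2 : ℝ) ^ (-(n : ℝ) / 2) = ((2 : ℝ) ^ n)⁻¹ := by
  rw [← Real.rpow_add (by norm_num : (0:ℝ) < 2)]
  have h : (-(n : ℝ) / 2 + -(n : ℝ) / 2) = -(n : ℝ) := by ring
  rw [h, Real.rpow_neg (by norm_num : (0:ℝ) ≤ 2), Real.rpow_natCast]

lemma eps_bound {n l : ℕ} (i : Fin l) (j : Bool) :
    ‖Peq n l i j * PhiS n l i j‖ ≤ (2 : ℝ) ^ (-(n : ℝ) / 2) := by
  have hc : ‖star (Peq n l i j * PhiS n l i j) * (Peq n l i j * PhiS n l i j)‖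
      = ‖Peq n l i j * PhiS n l i j‖ * ‖Peq n l i j * PhiS n l i j‖ :=
    CStarRing.norm_star_mul_self
  have hid : star (Peq n l i j * PhiS n l i j) * (Peq n l i j * PhiS n l i j)
      = ((2 : ℂ) ^ n)⁻¹ • PhiS n l i j := by
    rw [star_mul, star_eq_self_Peq, star_eq_self_PhiS]
    calc PhiS n l i j * Peq n l i j * (Peq n l i j * PhiS n l i j)
        = PhiS n l i j * (Peq n l i j * (Peq n l i j * PhiS n l i j)) := by rw [mul_assoc]
      _ = PhiS n l i j * (Peq n l i j * Peq n l i j * PhiS n l i j) := by rw [mul_assoc]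
      _ = PhiS n l i j * (Peq n l i j * PhiS n l i j) := by rw [Peq_idem]
      _ = ((2 : ℂ) ^ n)⁻¹ • PhiS n l i j := PhiS_Peq_PhiS i j
  have hsmul : ‖((2 : ℂ) ^ n)⁻¹ • PhiS n l i j‖ ≤ ((2 : ℝ) ^ n)⁻¹ := by
    rw [norm_smul, norm_inv, norm_pow, norm_two_complex]
    have := norm_PhiS_le_one (n := n) (l := l) i j
    have hp : (0:ℝ) < ((2:ℝ) ^ n)⁻¹ := by positivity
    nlinarith
  rw [hid] at hc
  have hsq : ‖Peq n l i j * PhiS n l i j‖ * ‖Peq n l i j * PhiS n l i j‖ ≤ ((2 : ℝ) ^ n)⁻¹ := by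
    rw [← hc]; exact hsmul
  have hε : (0:ℝ) < (2 : ℝ) ^ (-(n : ℝ) / 2) := Real.rpow_pos_of_pos (by norm_num) _
  nlinarith [norm_nonneg (Peq n l i j * PhiS n l i j), eps_sq (n := n)]

lemma rho_bound {n l : ℕ} (i : Fin l) (j : Bool) :
    ‖Peq n l i j * PhiS n l i j - PhiS n l i j * Peq n l i j‖
      ≤ ‖Peq n l i j * PhiS n l i j‖ := by
  rw [Matrix.cstar_norm_def, Matrix.cstar_norm_def, map_sub, map_mul, map_mul]
  set T := Matrix.toEuclideanCLM (n := Idx n l) (𝕜 := ℂ)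
  have hsaP : IsSelfAdjoint (T (Peq n l i j)) := by
    rw [IsSelfAdjoint, ← map_star, star_eq_self_Peq]
  have hsaΦ : IsSelfAdjoint (T (PhiS n l i j)) := by
    rw [IsSelfAdjoint, ← map_star, star_eq_self_PhiS]
  have hidem : T (Peq n l i j) * T (Peq n l i j) = T (Peq n l i j) := by
    rw [← map_mul, Peq_idem]
  refine (comm_proj_bound _ _ hsaP hidem hsaΦ).trans ?_
  have hps : ‖(1 : EuclideanSpace ℂ (Idx n l) →L[ℂ] EuclideanSpace ℂ (Idx n l))
      - T (Peq n l i j)‖ ≤ 1 :=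
    proj_norm_le_one _ (one_sub_proj _ (by rw [← map_star, star_eq_self_Peq]) hidem)
  calc ‖T (Peq n l i j) * T (PhiS n l i j) * (1 - T (Peq n l i j))‖
      ≤ ‖T (Peq n l i j) * T (PhiS n l i j)‖ * ‖1 - T (Peq n l i j)‖ := norm_mul_le _ _
    _ ≤ ‖T (Peq n l i j) * T (PhiS n l i j)‖ * 1 := by
        have := norm_nonneg (T (Peq n l i j) * T (PhiS n l i j))
        nlinarith
    _ = ‖T (Peq n l i j) * T (PhiS n l i j)‖ := mul_one _

lemma main_bound {n l : ℕ} (U0 : Matrix (Bn n × Bn n) (Bn n × Bn n) ℂ)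
    (hU0 : U0ᴴ * U0 = 1) (i : Fin l) (j : Bool) :
    ‖Uh n l U0 * PhiS n l i j - PhiS n l i j * Uh n l U0‖
      ≤ 6 * (2 : ℝ) ^ (-(n : ℝ) / 2) := by
  set ε : ℝ := (2 : ℝ) ^ (-(n : ℝ) / 2) with hε
  have hεnn : (0:ℝ) ≤ ε := le_of_lt (Real.rpow_pos_of_pos (by norm_num) _)
  set Φ := PhiS n l i j with hΦ
  have hrho : ‖Peq n l i j * Φ - Φ * Peq n l i j‖ ≤ ε :=
    (rho_bound i j).trans (eps_bound i j)
  have h1 : ‖(1 : Matrix (Idx n l) (Idx n l) ℂ)‖ ≤ 1 := norm_one_le'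
  have hC : ‖Cnot n l i j‖ ≤ 1 := isom_norm_le_one _
    (by rw [Matrix.star_eq_conjTranspose]; exact Cnot_unitary i j)
  have hUext : ‖Uext n l U0‖ ≤ 1 := isom_norm_le_one _
    (by rw [Matrix.star_eq_conjTranspose]; exact Uext_unitary U0 hU0)
  have hQm : ‖Qm n l i j‖ ≤ 1 := proj_norm_le_one _
    (by rw [Matrix.star_eq_conjTranspose, Qm_conjT]; exact Qm_idem i j)
  have hPnstar : star (Pneq n l) = Pneq n l := by
    rw [Matrix.star_eq_conjTranspose, Pneq_conjT]
  have hPn : ‖Pneq n l‖ ≤ 1 := proj_norm_le_one _ (by rw [hPnstar]; exact Pneq_idem)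
  have hPn1 : ‖(1 : Matrix (Idx n l) (Idx n l) ℂ) - Pneq n l‖ ≤ 1 :=
    proj_norm_le_one _ (one_sub_proj _ hPnstar Pneq_idem)
  have hUneq : ‖Uneq n l U0‖ ≤ 2 := by
    rw [Uneq_eq]
    calc ‖Pneq n l * Uext n l U0 + (1 - Pneq n l)‖
        ≤ ‖Pneq n l * Uext n l U0‖ + ‖(1 : Matrix (Idx n l) (Idx n l) ℂ) - Pneq n l‖ :=
          norm_add_le _ _
      _ ≤ 2 := by
          have := norm_mul_le (Pneq n l) (Uext n l U0)
          have := norm_nonneg (Pneq n l)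
          have := norm_nonneg (Uext n l U0)
          nlinarith
  have hcomm_neq : ‖Uneq n l U0 * Φ - Φ * Uneq n l U0‖ ≤ 2 * ε := by
    rw [hΦ, comm_Uneq i j U0]
    have hswap : ‖PhiS n l i j * Peq n l i j - Peq n l i j * PhiS n l i j‖ ≤ ε := by
      rw [norm_sub_rev]; exact hrho
    calc ‖Qm n l i j * (PhiS n l i j * Peq n l i j - Peq n l i j * PhiS n l i j)
          * (Uext n l U0 - 1)‖
        ≤ ‖Qm n l i j * (PhiS n l i j * Peq n l i j - Peq n l i j * PhiS n l i j)‖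
          * ‖Uext n l U0 - 1‖ := norm_mul_le _ _
      _ ≤ 2 * ε := by
          have hm := norm_mul_le (Qm n l i j)
            (PhiS n l i j * Peq n l i j - Peq n l i j * PhiS n l i j)
          have hs : ‖Uext n l U0 - 1‖ ≤ 2 := by
            have := norm_sub_le (Uext n l U0) (1 : Matrix (Idx n l) (Idx n l) ℂ)
            nlinarith
          have h0 := norm_nonneg (Qm n l i j *
            (PhiS n l i j * Peq n l i j - Peq n l i j * PhiS n l i j))
          have h0' := norm_nonneg (PhiS n l i j * Peq n l i j - Peq n l i j * PhiS n l i j)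
          have h0'' := norm_nonneg (Uext n l U0 - 1)
          nlinarith
  have hcomm_ij : ‖Uij n l i j * Φ - Φ * Uij n l i j‖ ≤ 2 * ε := by
    rw [hΦ, comm_Uij i j]
    calc ‖(Peq n l i j * PhiS n l i j - PhiS n l i j * Peq n l i j) * (Cnot n l i j - 1)‖
        ≤ ‖Peq n l i j * PhiS n l i j - PhiS n l i j * Peq n l i j‖
          * ‖Cnot n l i j - 1‖ := norm_mul_le _ _
      _ ≤ 2 * ε := by
          have hs : ‖Cnot n l i j - 1‖ ≤ 2 := by
            have := norm_sub_le (Cnot n l i j) (1 : Matrix (Idx n l) (Idx n l) ℂ)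
            nlinarith
          have h0 := norm_nonneg (Peq n l i j * PhiS n l i j - PhiS n l i j * Peq n l i j)
          have h0' := norm_nonneg (Cnot n l i j - 1)
          nlinarith
  -- the product of the Uij's
  set L : List (Matrix (Idx n l) (Idx n l) ℂ) :=
    List.ofFn (fun a : Fin l => Uij n l a false * Uij n l a true) with hL
  have hLisom : ∀ x ∈ L, star x * x = 1 := by
    intro x hx
    rw [hL, List.mem_ofFn] at hx
    obtain ⟨a, rfl⟩ := hx
    exact mul_isom _ _
      (by rw [Matrix.star_eq_conjTranspose]; exact Uij_unitary a false)
      (by rw [Matrix.star_eq_conjTranspose]; exact Uij_unitary a true)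
  have hLnorm : ∀ x ∈ L, ‖x‖ ≤ 1 := fun x hx => isom_norm_le_one x (hLisom x hx)
  have hAnorm : ‖L.prod‖ ≤ 1 := norm_prod_le_one L hLnorm
  have hAcomm : ‖L.prod * Φ - Φ * L.prod‖ ≤ 2 * ε := by
    refine (comm_list_bound Φ L hLnorm).trans ?_
    rw [hL, List.map_ofFn, List.sum_ofFn]
    have hUij1 : ∀ (a : Fin l) (b : Bool), ‖Uij n l a b‖ ≤ 1 := fun a b =>
      isom_norm_le_one _ (by rw [Matrix.star_eq_conjTranspose]; exact Uij_unitary a b)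
    have hzero : ∀ a : Fin l, a ≠ i →
        ‖Uij n l a false * Uij n l a true * Φ
          - Φ * (Uij n l a false * Uij n l a true)‖ = 0 := by
      intro a ha
      have hf : ((a, false) : Fin l × Bool) ≠ (i, j) := fun h => ha (congrArg Prod.fst h)
      have ht : ((a, true) : Fin l × Bool) ≠ (i, j) := fun h => ha (congrArg Prod.fst h)
      have hcommute : Uij n l a false * Uij n l a true * Φ
          = Φ * (Uij n l a false * Uij n l a true) := by
        rw [hΦ, mul_assoc, Uij_comm_PhiS ht, ← mul_assoc, Uij_comm_PhiS hf, mul_assoc]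
      simp [hcommute]
    simp only [Function.comp_apply]
    rw [Fintype.sum_eq_single i hzero]
    -- now bound the i-th term
    cases j with
    | false =>
      have ht : ((i, true) : Fin l × Bool) ≠ (i, false) := by simp
      have hsplit : Uij n l i false * Uij n l i true * Φ
          - Φ * (Uij n l i false * Uij n l i true)
          = (Uij n l i false * Φ - Φ * Uij n l i false) * Uij n l i true := by
        have hc : Uij n l i true * PhiS n l i false
            = PhiS n l i false * Uij n l i true := Uij_comm_PhiS ht
        rw [hΦ, mul_assoc, hc]
        noncomm_ring
      rw [hsplit]
      calc ‖(Uij n l i false * Φ - Φ * Uij n l i false) * Uij n l i true‖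
          ≤ ‖Uij n l i false * Φ - Φ * Uij n l i false‖ * ‖Uij n l i true‖ :=
            norm_mul_le _ _
        _ ≤ 2 * ε := by
            have := hUij1 i true
            have := hcomm_ij
            have := norm_nonneg (Uij n l i false * Φ - Φ * Uij n l i false)
            have := norm_nonneg (Uij n l i true)
            nlinarith
    | true =>
      have hf : ((i, false) : Fin l × Bool) ≠ (i, true) := by simp
      have hsplit : Uij n l i false * Uij n l i true * Φ
          - Φ * (Uij n l i false * Uij n l i true)
          = Uij n l i false * (Uij n l i true * Φ - Φ * Uij n l i true) := by
        have hc : PhiS n l i true * Uij n l i false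
            = Uij n l i false * PhiS n l i true := (Uij_comm_PhiS hf).symm
        rw [hΦ, ← mul_assoc (PhiS n l i true), hc]
        noncomm_ring
      rw [hsplit]
      calc ‖Uij n l i false * (Uij n l i true * Φ - Φ * Uij n l i true)‖
          ≤ ‖Uij n l i false‖ * ‖Uij n l i true * Φ - Φ * Uij n l i true‖ :=
            norm_mul_le _ _
        _ ≤ 2 * ε := by
            have := hUij1 i false
            have := hcomm_ij
            have := norm_nonneg (Uij n l i true * Φ - Φ * Uij n l i true)
            have := norm_nonneg (Uij n l i false)
            nlinarith
  -- final assembly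
  have hsplit : Uh n l U0 * Φ - Φ * Uh n l U0
      = L.prod * (Uneq n l U0 * Φ - Φ * Uneq n l U0)
        + (L.prod * Φ - Φ * L.prod) * Uneq n l U0 := by
    rw [Uh, hL]
    noncomm_ring
  rw [hsplit]
  calc ‖L.prod * (Uneq n l U0 * Φ - Φ * Uneq n l U0)
        + (L.prod * Φ - Φ * L.prod) * Uneq n l U0‖
      ≤ ‖L.prod * (Uneq n l U0 * Φ - Φ * Uneq n l U0)‖
        + ‖(L.prod * Φ - Φ * L.prod) * Uneq n l U0‖ := norm_add_le _ _
    _ ≤ 6 * ε := by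
        have hm1 := norm_mul_le L.prod (Uneq n l U0 * Φ - Φ * Uneq n l U0)
        have hm2 := norm_mul_le (L.prod * Φ - Φ * L.prod) (Uneq n l U0)
        have h01 := norm_nonneg (Uneq n l U0 * Φ - Φ * Uneq n l U0)
        have h02 := norm_nonneg (L.prod * Φ - Φ * L.prod)
        have h03 := norm_nonneg L.prod
        have h04 := norm_nonneg (Uneq n l U0)
        nlinarith

end NormSec


/-- For the Lamport superposition-oracle hash unitary `U_h` (the case `w = 2`), the
commutator with the uniform-superposition projector on any secret-key register
satisfies `‖[U_h, Φ_{S_i^j}]‖ ≤ 6·2^{−n/2}`. -/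
theorem stmt_10 (n l : ℕ)
    (U0 : Matrix (Bn n × Bn n) (Bn n × Bn n) ℂ) (hU0 : U0ᴴ * U0 = 1)
    (i : Fin l) (j : Bool) :
    ‖Matrix.toEuclideanCLM (𝕜 := ℂ)
        (Uh n l U0 * PhiS n l i j - PhiS n l i j * Uh n l U0)‖ ≤
      6 * (2 : ℝ) ^ (-(n : ℝ) / 2) := by
  have h := main_bound U0 hU0 i j
  rw [Matrix.cstar_norm_def] at h
  exact h

end Stmt10
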